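/- Let C be a monoidal category such that the monoidal unit 1 is terminal, the functor C(1, −) is faithful, and C(1, −) is strong monoidal into (Set, ×). Let F : C → C be a functor equipped with maps θ_{A,B} : A ⊗ FB → F(A ⊗ B) natural in A and B such that F(λ_A) ∘ θ_{1,A} = λ_{FA} for all A (λ the left unitor). Then θ is the unique left strength for F; in particular θ automatically satisfies the associativity coherence axiom for strengths. -/

import Mathlib

open CategoryTheory MonoidalCategory

universe v₁ u₁

private theorem aux_struct_lemma {C : Type u₁} [Category.{v₁} C] [MonoidalCategory C] :
    tensorHom (λ_ (𝟙_ C)).inv (𝟙 (𝟙_ C)) ≫ (α_ (𝟙_ C) (𝟙_ C) (𝟙_ C)).hom ≫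
      tensorHom (𝟙 (𝟙_ C)) (λ_ (𝟙_ C)).hom = 𝟙 _ := by
  coherence

private theorem aux_pt_assoc {C : Type u₁} [Category.{v₁} C] [MonoidalCategory C]
    (A B X : C) (a : 𝟙_ C ⟶ A) (a' : 𝟙_ C ⟶ B) :
    (λ_ X).inv ≫ tensorHom a' (𝟙 X) ≫ (λ_ (B ⊗ X)).inv ≫ tensorHom a (𝟙 (B ⊗ X)) =
    (λ_ X).inv ≫ tensorHom ((λ_ (𝟙_ C)).inv ≫ tensorHom a a') (𝟙 X) ≫ (α_ A B X).hom := by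
  have hstruct : (λ_ ((𝟙_ C) ⊗ X)).inv
      = tensorHom (λ_ (𝟙_ C)).inv (𝟙 X) ≫ (α_ (𝟙_ C) (𝟙_ C) X).hom := by coherence
  rw [leftUnitor_inv_naturality_assoc, hstruct]
  have h1 : tensorHom ((λ_ (𝟙_ C)).inv ≫ tensorHom a a') (𝟙 X)
      = tensorHom (λ_ (𝟙_ C)).inv (𝟙 X) ≫ tensorHom (tensorHom a a') (𝟙 X) := by
    rw [tensorHom_comp_tensorHom]; simp
  rw [h1]
  simp only [Category.assoc]
  rw [associator_naturality]
  have h2 : (𝟙_ C) ◁ (tensorHom a' (𝟙 X)) ≫ tensorHom a (𝟙 (B ⊗ X))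
      = tensorHom a (tensorHom a' (𝟙 X)) := by
    rw [← id_tensorHom, tensorHom_comp_tensorHom]; simp
  rw [h2]

private theorem aux_key {C : Type u₁} [Category.{v₁} C] [MonoidalCategory C]
    (F : C ⥤ C)
    (θ : ∀ A B : C, A ⊗ F.obj B ⟶ F.obj (A ⊗ B))
    (hnat : ∀ {A A' B B' : C} (f : A ⟶ A') (g : B ⟶ B'),
      tensorHom f (F.map g) ≫ θ A' B' = θ A B ≫ F.map (tensorHom f g))
    (hunit : ∀ A : C, θ (𝟙_ C) A ≫ F.map (λ_ A).hom = (λ_ (F.obj A)).hom)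
    (A X : C) (a : 𝟙_ C ⟶ A) (b : 𝟙_ C ⟶ F.obj X) :
    tensorHom a b ≫ θ A X =
      (λ_ (𝟙_ C)).hom ≫ b ≫ F.map ((λ_ X).inv ≫ tensorHom a (𝟙 X)) := by
  have hθ1 : θ (𝟙_ C) X = (λ_ (F.obj X)).hom ≫ F.map (λ_ X).inv := by
    rw [← hunit X, Category.assoc, ← F.map_comp]
    simp
  have hsplit : tensorHom a b = tensorHom (𝟙 (𝟙_ C)) b ≫ tensorHom a (F.map (𝟙 X)) := by
    rw [tensorHom_comp_tensorHom]; simp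
  rw [hsplit, Category.assoc, hnat a (𝟙 X), ← Category.assoc, hθ1]
  simp [MonoidalCategory.tensorHom_def]


/-- In a concrete pointed monoidal category (the unit is terminal, `C(1,−)` is faithful and
strong monoidal into `Set`), any natural family `θ_{A,B} : A ⊗ FB ⟶ F(A ⊗ B)` satisfying the
left unitor condition is the unique left strength for `F`: it automatically satisfies the
associativity coherence, and any other such family equals it. -/
theorem unique_left_strength_of_concrete_pointed
    {C : Type u₁} [Category.{v₁} C] [MonoidalCategory C]
    -- the monoidal unit is terminal
    (hterm : Limits.IsTerminal (𝟙_ C))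
    -- `C(1,−)` is faithful
    (hfaith : ∀ {X Y : C} (f g : X ⟶ Y), (∀ h : 𝟙_ C ⟶ X, h ≫ f = h ≫ g) → f = g)
    -- `C(1,−)` is strong monoidal into `(Set, ×)`
    (hstrong : ∀ X Y : C, Function.Bijective
      (fun p : (𝟙_ C ⟶ X) × (𝟙_ C ⟶ Y) => (λ_ (𝟙_ C)).inv ≫ tensorHom p.1 p.2))
    (F : C ⥤ C)
    (θ : ∀ A B : C, A ⊗ F.obj B ⟶ F.obj (A ⊗ B))
    (hnat : ∀ {A A' B B' : C} (f : A ⟶ A') (g : B ⟶ B'),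
      tensorHom f (F.map g) ≫ θ A' B' = θ A B ≫ F.map (tensorHom f g))
    (hunit : ∀ A : C, θ (𝟙_ C) A ≫ F.map (λ_ A).hom = (λ_ (F.obj A)).hom) :
    -- associativity coherence holds automatically
    (∀ A B X : C,
      (α_ A B (F.obj X)).hom ≫ tensorHom (𝟙 A) (θ B X) ≫ θ A (B ⊗ X) =
        θ (A ⊗ B) X ≫ F.map (α_ A B X).hom) ∧
    -- and `θ` is the unique such family
    (∀ θ' : ∀ A B : C, A ⊗ F.obj B ⟶ F.obj (A ⊗ B),
      (∀ {A A' B B' : C} (f : A ⟶ A') (g : B ⟶ B'),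
        tensorHom f (F.map g) ≫ θ' A' B' = θ' A B ≫ F.map (tensorHom f g)) →
      (∀ A : C, θ' (𝟙_ C) A ≫ F.map (λ_ A).hom = (λ_ (F.obj A)).hom) →
      ∀ A B : C, θ' A B = θ A B) := by
  have key := aux_key F θ hnat hunit
  constructor
  · intro A B X
    apply hfaith
    intro h
    obtain ⟨⟨p, b⟩, hp⟩ := (hstrong (A ⊗ B) (F.obj X)).2 h
    obtain ⟨⟨a, a'⟩, hq⟩ := (hstrong A B).2 p
    simp only at hp hq
    rw [← hp]
    simp only [Category.assoc]
    congr 1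
    set c : 𝟙_ C ⟶ F.obj (B ⊗ X) := b ≫ F.map ((λ_ X).inv ≫ tensorHom a' (𝟙 X)) with hc
    have e1 : tensorHom p b
        = tensorHom (λ_ (𝟙_ C)).inv (𝟙 (𝟙_ C)) ≫ tensorHom (tensorHom a a') b := by
      rw [tensorHom_comp_tensorHom, hq]; simp
    have e3 : tensorHom a (tensorHom a' b) ≫ tensorHom (𝟙 A) (θ B X)
        = tensorHom (𝟙 (𝟙_ C)) (λ_ (𝟙_ C)).hom ≫ tensorHom a c := by
      rw [tensorHom_comp_tensorHom, key B X a' b, tensorHom_comp_tensorHom]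
      simp [hc]
    calc tensorHom p b ≫ (α_ A B (F.obj X)).hom ≫ tensorHom (𝟙 A) (θ B X) ≫ θ A (B ⊗ X)
        = tensorHom (λ_ (𝟙_ C)).inv (𝟙 (𝟙_ C)) ≫ tensorHom (tensorHom a a') b ≫
            (α_ A B (F.obj X)).hom ≫ tensorHom (𝟙 A) (θ B X) ≫ θ A (B ⊗ X) := by
          rw [e1]; simp only [Category.assoc]
      _ = tensorHom (λ_ (𝟙_ C)).inv (𝟙 (𝟙_ C)) ≫ (α_ (𝟙_ C) (𝟙_ C) (𝟙_ C)).hom ≫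
            tensorHom a (tensorHom a' b) ≫ tensorHom (𝟙 A) (θ B X) ≫ θ A (B ⊗ X) := by
          rw [associator_naturality_assoc]
      _ = tensorHom (λ_ (𝟙_ C)).inv (𝟙 (𝟙_ C)) ≫ (α_ (𝟙_ C) (𝟙_ C) (𝟙_ C)).hom ≫
            tensorHom (𝟙 (𝟙_ C)) (λ_ (𝟙_ C)).hom ≫ tensorHom a c ≫ θ A (B ⊗ X) := by
          rw [← Category.assoc (tensorHom a (tensorHom a' b)), e3]
          simp only [Category.assoc]
      _ = tensorHom a c ≫ θ A (B ⊗ X) := by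
          rw [← Category.assoc, ← Category.assoc, ← Category.assoc]
          rw [show (tensorHom (λ_ (𝟙_ C)).inv (𝟙 (𝟙_ C)) ≫ (α_ (𝟙_ C) (𝟙_ C) (𝟙_ C)).hom) ≫
              tensorHom (𝟙 (𝟙_ C)) (λ_ (𝟙_ C)).hom = 𝟙 _ by
            simpa [Category.assoc] using (aux_struct_lemma (C := C))]
          simp
      _ = (λ_ (𝟙_ C)).hom ≫ c ≫ F.map ((λ_ (B ⊗ X)).inv ≫ tensorHom a (𝟙 (B ⊗ X))) := by
          rw [key A (B ⊗ X) a c]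
      _ = tensorHom p b ≫ θ (A ⊗ B) X ≫ F.map (α_ A B X).hom := by
          rw [reassoc_of% key (A ⊗ B) X p b]
          simp only [hc, Category.assoc, ← F.map_comp]
          congr 2
          rw [← hq]
          exact congrArg F.map (by simpa only [Category.assoc] using aux_pt_assoc A B X a a')
  · intro θ' hnat' hunit' A B
    apply hfaith
    intro h
    obtain ⟨⟨a, b⟩, hp⟩ := (hstrong A (F.obj B)).2 h
    simp only at hp
    rw [← hp]
    simp only [Category.assoc]
    rw [aux_key F θ' hnat' hunit' A B a b, key A B a b]
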